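/- Let X be a Tychonoff (completely regular Hausdorff) space, let βX be its Stone–Čech compactification (with X identified with its image), and let υX = ⋂{C : C is a cozero-set of βX containing X} be the Hewitt realcompactification of X inside βX. Then for an open subset U of X, the closure cl_X U is pseudocompact if and only if cl_{βX} U ⊆ υX. -/

import Mathlib

open Set Topology

/-- An ideal in a set `X`: a nonempty collection of subsets of `X`, downward closed
and closed under finite unions. -/
def IsSetIdeal {X : Type*} (H : Set (Set X)) : Prop :=
  H.Nonempty ∧ (∀ A B : Set X, A ⊆ B → B ∈ H → A ∈ H) ∧
    (∀ A B : Set X, A ∈ H → B ∈ H → A ∪ B ∈ H)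

/-- A continuous map `f : X → [0,1]` is 2-valued modulo an ideal `H` if `f⁻¹(0) ∉ H`,
`f⁻¹(1) ∉ H`, and `X \ (f⁻¹(0) ∪ f⁻¹(1)) ∈ H`. -/
def TwoValuedMod {X : Type*} [TopologicalSpace X] (H : Set (Set X)) (f : X → ℝ) : Prop :=
  Continuous f ∧ (∀ x, f x ∈ Set.Icc (0 : ℝ) 1) ∧
    f ⁻¹' {0} ∉ H ∧ f ⁻¹' {1} ∉ H ∧ (f ⁻¹' {0} ∪ f ⁻¹' {1})ᶜ ∈ H

/-- `X` is connected modulo the ideal `H` if there is no continuous `f : X → [0,1]`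
that is 2-valued modulo `H`. -/
def ConnectedMod (X : Type*) [TopologicalSpace X] (H : Set (Set X)) : Prop :=
  ¬ ∃ f : X → ℝ, TwoValuedMod H f

/-- A subset `S` of `X` is pseudocompact if every continuous real-valued function on the
subspace `S` is bounded. -/
def IsPseudocompactSet {X : Type*} [TopologicalSpace X] (S : Set X) : Prop :=
  ∀ f : ↥S → ℝ, Continuous f → ∃ M : ℝ, ∀ y : ↥S, |f y| ≤ M

/-- The Hewitt realcompactification `υX` of `X` inside `βX`: the intersection of all
cozero-sets of `βX` containing the image of `X`. -/
def upsilonSet (X : Type*) [TopologicalSpace X] : Set (StoneCech X) :=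
  ⋂₀ {C : Set (StoneCech X) |
    (∃ g : StoneCech X → ℝ, Continuous g ∧ C = {p | g p ≠ 0}) ∧
      Set.range (stoneCechUnit : X → StoneCech X) ⊆ C}


lemma exists_bump {X : Type*} [TopologicalSpace X] [T35Space X] {W : Set X} (hW : IsOpen W)
    {x : X} (hx : x ∈ W) (c : ℝ) (hc : 0 ≤ c) :
    ∃ g : X → ℝ, Continuous g ∧ (∀ y, g y ∈ Set.Icc 0 c) ∧ g x = c ∧ ∀ y ∉ W, g y = 0 := by
  obtain ⟨f, hf, hfx, hfK⟩ := CompletelyRegularSpace.completely_regular x Wᶜ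
    hW.isClosed_compl (by simpa using hx)
  refine ⟨fun y => c * (1 - (f y : ℝ)), ?_, ?_, ?_, ?_⟩
  · exact continuous_const.mul (continuous_const.sub (continuous_subtype_val.comp hf))
  · intro y
    have h1 := (f y).2.1
    have h2 := (f y).2.2
    dsimp only
    constructor
    · nlinarith
    · nlinarith
  · show c * (1 - ((f x : ℝ))) = c
    rw [hfx]; simp
  · intro y hy
    have h1 : f y = 1 := hfK (by simpa using hy)
    show c * (1 - ((f y : ℝ))) = 0
    rw [h1]; simp

lemma unbounded_on_open {X : Type*} [TopologicalSpace X] {U : Set X}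
    {f : ↥(closure U) → ℝ} (hf : Continuous f) (hub : ∀ M : ℝ, ∃ y, ¬ |f y| ≤ M) :
    ∀ n : ℕ, ∃ x : X, ∃ hx : x ∈ closure U, x ∈ U ∧ (n : ℝ) < |f ⟨x, hx⟩| := by
  by_contra hcon
  push_neg at hcon
  obtain ⟨n, hn⟩ := hcon
  have hD : Dense {y : ↥(closure U) | (y : X) ∈ U} := by
    intro z
    rw [closure_subtype]
    refine closure_mono ?_ z.2
    intro a ha
    exact ⟨⟨a, subset_closure ha⟩, ha, rfl⟩
  have hE : IsClosed {y : ↥(closure U) | |f y| ≤ (n : ℝ)} :=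
    isClosed_le hf.abs continuous_const
  have hall : ∀ y : ↥(closure U), |f y| ≤ (n : ℝ) := by
    intro y
    have : closure {y : ↥(closure U) | (y : X) ∈ U} ⊆ {y | |f y| ≤ (n : ℝ)} := by
      apply closure_minimal _ hE
      intro z hz
      simpa using hn z.1 z.2 hz
    exact this (hD.closure_eq ▸ mem_univ y)
  obtain ⟨y, hy⟩ := hub n
  exact hy (hall y)

lemma exists_smallvalue {X : Type*} [TopologicalSpace X] [T35Space X] {U : Set X}
    (hU : IsOpen U) {f : ↥(closure U) → ℝ} (hf : Continuous f)
    (hub : ∀ M : ℝ, ∃ y, ¬ |f y| ≤ M) :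
    ∃ h : X → ℝ, Continuous h ∧ (∀ y, h y ∈ Set.Icc (0:ℝ) 1) ∧ (∀ y, 0 < h y) ∧
      ∀ n : ℕ, ∃ x ∈ U, h x ≤ 1 / (n + 1) := by
  have key := unbounded_on_open hf hub
  choose x hxcl hxU hxf using key
  have hV : ∀ n : ℕ, ∃ V : Set X, IsOpen V ∧
      (Subtype.val ⁻¹' V : Set ↥(closure U)) = {y | (n:ℝ) < |f y|} := by
    intro n
    have : IsOpen {y : ↥(closure U) | (n:ℝ) < |f y|} := isOpen_lt continuous_const hf.abs
    rwa [isOpen_induced_iff] at this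
  choose V hVopen hVpre using hV
  have hxW : ∀ n, x n ∈ U ∩ V n := by
    intro n
    refine ⟨hxU n, ?_⟩
    have : (⟨x n, hxcl n⟩ : ↥(closure U)) ∈ Subtype.val ⁻¹' V n := by
      rw [hVpre n]; exact hxf n
    exact this
  have hg : ∀ n : ℕ, ∃ g : X → ℝ, Continuous g ∧ (∀ y, g y ∈ Set.Icc 0 (n:ℝ)) ∧
      g (x n) = n ∧ ∀ y ∉ U ∩ V n, g y = 0 :=
    fun n => exists_bump (hU.inter (hVopen n)) (hxW n) n (Nat.cast_nonneg n)
  choose g hgc hgIcc hgx hg0 using hg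
  have hloc : ∀ y : X, ∃ O : Set X, IsOpen O ∧ y ∈ O ∧
      ∃ N : ℕ, ∀ z ∈ O, ∀ k, N ≤ k → g k z = 0 := by
    intro y
    by_cases hy : y ∈ closure U
    · set N := ⌈|f ⟨y, hy⟩|⌉₊ + 1 with hN
      have hopen : IsOpen {z : ↥(closure U) | |f z| < (N:ℝ)} :=
        isOpen_lt hf.abs continuous_const
      rw [isOpen_induced_iff] at hopen
      obtain ⟨O, hOopen, hOpre⟩ := hopen
      refine ⟨O, hOopen, ?_, N, ?_⟩
      · have : (⟨y, hy⟩ : ↥(closure U)) ∈ Subtype.val ⁻¹' O := by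
          rw [hOpre]
          show |f ⟨y, hy⟩| < (N:ℝ)
          calc |f ⟨y, hy⟩| ≤ (⌈|f ⟨y, hy⟩|⌉₊ : ℝ) := Nat.le_ceil _
          _ < (N:ℝ) := by rw [hN]; push_cast; linarith
        exact this
      · intro z hz k hk
        apply hg0
        rintro ⟨hzU, hzV⟩
        have hzcl : z ∈ closure U := subset_closure hzU
        have h1 : (k:ℝ) < |f ⟨z, hzcl⟩| := by
          have h' : (⟨z, hzcl⟩ : ↥(closure U)) ∈ Subtype.val ⁻¹' V k := hzV
          rw [hVpre k] at h'; exact h'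
        have h2 : |f ⟨z, hzcl⟩| < (N:ℝ) := by
          have h' : (⟨z, hzcl⟩ : ↥(closure U)) ∈ Subtype.val ⁻¹' O := hz
          rw [hOpre] at h'; exact h'
        have h3 : (N:ℝ) ≤ (k:ℝ) := Nat.cast_le.mpr hk
        linarith
    · refine ⟨(closure U)ᶜ, isClosed_closure.isOpen_compl, hy, 0, ?_⟩
      intro z hz k _
      apply hg0
      rintro ⟨hzU, -⟩
      exact hz (subset_closure hzU)
  set F : X → ℝ := fun y => ∑' k, g k y with hF
  have hsupp : ∀ y : X, ∃ N : ℕ, ∀ k, N ≤ k → g k y = 0 := by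
    intro y; obtain ⟨O, _, hyO, N, hN⟩ := hloc y; exact ⟨N, fun k hk => hN y hyO k hk⟩
  have hsum : ∀ y, Summable (fun k => g k y) := by
    intro y; obtain ⟨N, hN⟩ := hsupp y
    exact summable_of_ne_finset_zero (s := Finset.range N)
      (fun k hk => hN k (by simpa using hk))
  have hFnn : ∀ y, 0 ≤ F y := fun y => tsum_nonneg (fun k => (hgIcc k y).1)
  have hFx : ∀ n : ℕ, (n:ℝ) ≤ F (x n) := by
    intro n
    calc (n:ℝ) = g n (x n) := (hgx n).symm
    _ ≤ F (x n) := Summable.le_tsum (hsum (x n)) n (fun k _ => (hgIcc k (x n)).1)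
  have hFcont : Continuous F := by
    rw [continuous_iff_continuousAt]
    intro y
    obtain ⟨O, hOopen, hyO, N, hN⟩ := hloc y
    have hc : ContinuousAt (fun z => ∑ k ∈ Finset.range N, g k z) y :=
      (continuous_finset_sum _ (fun k _ => hgc k)).continuousAt
    apply hc.congr
    filter_upwards [hOopen.mem_nhds hyO] with z hz
    exact (tsum_eq_sum (fun k hk => hN z hz k (by simpa using hk))).symm
  refine ⟨fun y => 1 / (1 + F y), ?_, ?_, ?_, ?_⟩
  · apply continuous_const.div (continuous_const.add hFcont)
    intro y; have := hFnn y; show 1 + F y ≠ 0; exact ne_of_gt (by linarith)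
  · intro y
    have := hFnn y
    constructor
    · positivity
    · rw [div_le_one (by linarith)]; linarith
  · intro y; have := hFnn y; positivity
  · intro n
    refine ⟨x n, hxU n, ?_⟩
    have h1 := hFx n
    have h2 := hFnn (x n)
    rw [div_le_div_iff₀ (by linarith) (by positivity)]
    linarith

/-- For an open subset `U` of a Tychonoff space `X`, the closure `cl_X U` is pseudocompact
iff `cl_{βX} U ⊆ υX`. -/
theorem pseudocompact_closure_iff_closure_subset_upsilon {X : Type*} [TopologicalSpace X]
    [T35Space X] (U : Set X) (hU : IsOpen U) :
    IsPseudocompactSet (closure U) ↔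
      closure (stoneCechUnit '' U) ⊆ upsilonSet X := by
  constructor
  · -- forward direction
    intro hpc p hp C hC
    obtain ⟨⟨g, hgc, rfl⟩, hrange⟩ := hC
    show g p ≠ 0
    by_contra hgp
    have hne : ∀ y : ↥(closure U), g (stoneCechUnit (y : X)) ≠ 0 := by
      intro y
      exact hrange ⟨(y : X), rfl⟩
    have hfc : Continuous fun y : ↥(closure U) => 1 / g (stoneCechUnit (y : X)) :=
      continuous_const.div
        (hgc.comp (continuous_stoneCechUnit.comp continuous_subtype_val)) hne
    obtain ⟨M, hM⟩ := hpc _ hfc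
    set M' := max M 1 with hM'
    have hM'pos : 0 < M' := lt_of_lt_of_le one_pos (le_max_right M 1)
    have hVopen : IsOpen {q : StoneCech X | |g q| < 1 / M'} :=
      isOpen_lt hgc.abs continuous_const
    have hpV : p ∈ {q : StoneCech X | |g q| < 1 / M'} := by
      show |g p| < 1 / M'
      rw [hgp]
      simpa using one_div_pos.mpr hM'pos
    obtain ⟨q, hqV, hq⟩ := mem_closure_iff.mp hp _ hVopen hpV
    obtain ⟨a, haU, rfl⟩ := hq
    have hacl : a ∈ closure U := subset_closure haU
    have h1 := hM ⟨a, hacl⟩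
    have h2 : |g (stoneCechUnit a)| < 1 / M' := hqV
    have h3 : g (stoneCechUnit a) ≠ 0 := hne ⟨a, hacl⟩
    have h4 : 0 < |g (stoneCechUnit a)| := abs_pos.mpr h3
    have h5 : M' < 1 / |g (stoneCechUnit a)| := by
      rw [lt_div_iff₀ h4]
      rw [lt_div_iff₀ hM'pos] at h2
      linarith
    have h6 : |(1 : ℝ) / g (stoneCechUnit a)| = 1 / |g (stoneCechUnit a)| := by
      rw [abs_div, abs_one]
    have h7 : M ≤ M' := le_max_left M 1
    simp only at h1
    rw [h6] at h1
    linarith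
  · -- reverse direction
    intro hsub
    by_contra hnp
    unfold IsPseudocompactSet at hnp
    push_neg at hnp
    obtain ⟨f, hf, hub⟩ := hnp
    obtain ⟨h, hhc, hhI, hhpos, hhsmall⟩ :=
      exists_smallvalue hU hf (fun M => (hub M).imp fun y hy => not_le.mpr hy)
    set h' : X → ↥(Set.Icc (0:ℝ) 1) := fun x => ⟨h x, hhI x⟩ with hh'
    have hh'c : Continuous h' := hhc.subtype_mk _
    set G := stoneCechExtend hh'c with hG
    set g : StoneCech X → ℝ := fun p => (G p : ℝ) with hg
    have hgc : Continuous g := continuous_subtype_val.comp (continuous_stoneCechExtend hh'c)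
    have hgunit : ∀ a : X, g (stoneCechUnit a) = h a := by
      intro a
      have := congrFun (stoneCechExtend_extends hh'c) a
      simp only [Function.comp_apply] at this
      exact congrArg Subtype.val this
    -- compact nonempty set
    obtain ⟨x0, hx0U, -⟩ := hhsmall 0
    have hKne : (closure (stoneCechUnit '' U)).Nonempty :=
      ⟨stoneCechUnit x0, subset_closure ⟨x0, hx0U, rfl⟩⟩
    have hKcp : IsCompact (closure (stoneCechUnit '' U)) := isClosed_closure.isCompact
    obtain ⟨p, hpK, hpmin⟩ := hKcp.exists_isMinOn hKne hgc.continuousOn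
    have hgp0 : g p = 0 := by
      by_contra hne0
      have hgpnn : 0 ≤ g p := (G p).2.1
      have hgppos : 0 < g p := lt_of_le_of_ne hgpnn (Ne.symm hne0)
      obtain ⟨n, hn⟩ := exists_nat_one_div_lt hgppos
      obtain ⟨a, haU, ha⟩ := hhsmall n
      have : g p ≤ g (stoneCechUnit a) := hpmin (subset_closure ⟨a, haU, rfl⟩)
      rw [hgunit a] at this
      linarith
    have hpups := hsub hpK
    have hmem : {q : StoneCech X | g q ≠ 0} ∈ {C : Set (StoneCech X) |
        (∃ g : StoneCech X → ℝ, Continuous g ∧ C = {p | g p ≠ 0}) ∧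
          Set.range (stoneCechUnit : X → StoneCech X) ⊆ C} := by
      refine ⟨⟨g, hgc, rfl⟩, ?_⟩
      rintro - ⟨a, rfl⟩
      show g (stoneCechUnit a) ≠ 0
      rw [hgunit a]
      exact (hhpos a).ne'
    exact (hpups _ hmem) hgp0
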